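/- Let H be a complex Hilbert space, A : H →L[ℂ] H a bounded self-adjoint operator (IsSelfAdjoint A), and s₁, s₂ ∈ H. Write U(t) = exp((−i t) • A). If ⟪s₁, U(t) s₂⟫ = 0 for all real t > 0 (the system starting in s₂ never returns to s₁ at any positive time), then ⟪s₁, U(t) s₂⟫ = 0 and ⟪s₂, U(t) s₁⟫ = 0 for every real t. In particular, there exist no times t₁ < t₂ with ⟪s₂, U(t₂ − t₁) s₁⟫ ≠ 0: the system can never make the transition from s₁ to s₂ at all. -/

import Mathlib

open scoped InnerProductSpace
open Complex

private lemma amp_analytic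
    {H : Type*} [NormedAddCommGroup H] [InnerProductSpace ℂ H] [CompleteSpace H]
    (A : H →L[ℂ] H) (s₁ s₂ : H) :
    AnalyticOnNhd ℝ
      (fun t : ℝ => ⟪s₁, NormedSpace.exp ((-(I * (t : ℂ))) • A) s₂⟫_ℂ) Set.univ := by
  intro t _
  have h1 : AnalyticAt ℝ (fun t : ℝ => t • ((-I) • A)) t :=
    (((ContinuousLinearMap.id ℝ ℝ).smulRight ((-I) • A)).analyticAt t)
  have h2 : AnalyticAt ℝ (NormedSpace.exp : (H →L[ℂ] H) → (H →L[ℂ] H))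
      (t • ((-I) • A)) := by
    exact NormedSpace.exp_analytic (𝕂 := ℝ) _
  have h3 : AnalyticAt ℝ
      (fun T : H →L[ℂ] H => ⟪s₁, T s₂⟫_ℂ) (NormedSpace.exp (t • ((-I) • A))) := by
    exact (((innerSL ℂ s₁).comp
      (ContinuousLinearMap.apply ℂ H s₂)).restrictScalars ℝ).analyticAt _
  have h21 := AnalyticAt.comp (g := NormedSpace.exp)
    (f := fun t : ℝ => t • ((-I) • A)) (x := t) h2 h1
  have h4 : AnalyticAt ℝ
      (fun t : ℝ => ⟪s₁, NormedSpace.exp (t • ((-I) • A)) s₂⟫_ℂ) t :=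
    AnalyticAt.comp (g := fun T : H →L[ℂ] H => ⟪s₁, T s₂⟫_ℂ)
      (f := fun t : ℝ => NormedSpace.exp (t • ((-I) • A))) (x := t) h3 h21
  have hfun : (fun t : ℝ => ⟪s₁, NormedSpace.exp ((-(I * (t : ℂ))) • A) s₂⟫_ℂ)
      = (fun t : ℝ => ⟪s₁, NormedSpace.exp (t • ((-I) • A)) s₂⟫_ℂ) := by
    funext u
    have harg : (-(I * (u : ℂ))) • A = u • ((-I) • A) := by
      rw [← smul_assoc, Complex.real_smul]
      congr 1
      ring
    rw [harg]
  rw [hfun]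
  exact h4

/-- (Paper's Theorem 2, after Unruh and Wald, for a bounded Hamiltonian.)
Let `A` be a bounded self-adjoint operator with evolution `U t = exp ((−i t) • A)`. If the
amplitude `⟪s₁, U t s₂⟫` vanishes for all `t > 0` (the system starting in `s₂` never returns
to `s₁`), then `⟪s₁, U t s₂⟫ = 0` and `⟪s₂, U t s₁⟫ = 0` for every real `t`; in particular
there are no times `t₁ < t₂` with `⟪s₂, U (t₂ − t₁) s₁⟫ ≠ 0`, i.e. the system can never make
the transition from `s₁` to `s₂` at all. -/
theorem no_irreversible_transition_of_bounded_selfAdjoint_hamiltonian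
    {H : Type*} [NormedAddCommGroup H] [InnerProductSpace ℂ H] [CompleteSpace H]
    (A : H →L[ℂ] H) (hA : IsSelfAdjoint A) (s₁ s₂ : H)
    (hnoreturn : ∀ t : ℝ, 0 < t →
      ⟪s₁, NormedSpace.exp ((-(I * (t : ℂ))) • A) s₂⟫_ℂ = 0) :
    (∀ t : ℝ, ⟪s₁, NormedSpace.exp ((-(I * (t : ℂ))) • A) s₂⟫_ℂ = 0 ∧
      ⟪s₂, NormedSpace.exp ((-(I * (t : ℂ))) • A) s₁⟫_ℂ = 0) ∧
    ¬ ∃ t₁ t₂ : ℝ, t₁ < t₂ ∧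
      ⟪s₂, NormedSpace.exp ((-(I * ((t₂ - t₁) : ℂ))) • A) s₁⟫_ℂ ≠ 0 := by
  -- The amplitude vanishes for all times, by the identity principle for analytic functions.
  have key : ∀ t : ℝ, ⟪s₁, NormedSpace.exp ((-(I * (t : ℂ))) • A) s₂⟫_ℂ = 0 := by
    have hzero := (amp_analytic A s₁ s₂).eqOn_zero_of_preconnected_of_eventuallyEq_zero
      isPreconnected_univ (Set.mem_univ (1 : ℝ)) ?_
    · intro t; exact hzero (Set.mem_univ t)
    · filter_upwards [Ioi_mem_nhds (by norm_num : (0:ℝ) < 1)] with u hu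
      exact hnoreturn u hu
  -- The reverse amplitude also vanishes, via the adjoint.
  have key2 : ∀ t : ℝ, ⟪s₂, NormedSpace.exp ((-(I * (t : ℂ))) • A) s₁⟫_ℂ = 0 := by
    intro t
    have hadj : ContinuousLinearMap.adjoint (NormedSpace.exp ((-(I * (t : ℂ))) • A))
        = NormedSpace.exp ((-(I * ((-t : ℝ) : ℂ))) • A) := by
      have : ContinuousLinearMap.adjoint (NormedSpace.exp ((-(I * (t : ℂ))) • A))
          = star (NormedSpace.exp ((-(I * (t : ℂ))) • A)) := rfl
      rw [this, NormedSpace.star_exp, star_smul, hA.star_eq]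
      congr 1
      simp only [star_neg, star_smul, RCLike.star_def, map_mul, Complex.conj_I,
        Complex.conj_ofReal, Complex.ofReal_neg]
      ring_nf
    calc ⟪s₂, NormedSpace.exp ((-(I * (t : ℂ))) • A) s₁⟫_ℂ
        = (starRingEnd ℂ) ⟪NormedSpace.exp ((-(I * (t : ℂ))) • A) s₁, s₂⟫_ℂ := by
          rw [inner_conj_symm]
      _ = (starRingEnd ℂ)
            ⟪s₁, ContinuousLinearMap.adjoint (NormedSpace.exp ((-(I * (t : ℂ))) • A)) s₂⟫_ℂ := by
          rw [ContinuousLinearMap.adjoint_inner_right]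
      _ = 0 := by rw [hadj, key (-t)]; simp
  refine ⟨fun t => ⟨key t, key2 t⟩, ?_⟩
  rintro ⟨t₁, t₂, _, hne⟩
  have h := key2 (t₂ - t₁)
  rw [Complex.ofReal_sub] at h
  exact hne h
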